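/- In a properly edge-coloured digraph G on n vertices with minimum in-degree at least (1−δ)n, let P be a rainbow path forest using a set of colours C(P) with |C(P)| ≤ (1−3δ)n, let Q be a set of 1/δ vertices, and let C ⊇ C(G)\C(P) be a set of colours with |C| − |C(G)\C(P)| = Aδn. Then the number of vertices v with at least 2 edges from v to Q having colours in C is at least (A+1)δn. -/

import Mathlib

theorem stmt15 (n : ℕ) (C : Type*) [DecidableEq C] (δ A : ℝ) (hδ : 0 < δ)
    (E P : Finset (Fin n × Fin n)) (hPE : P ⊆ E)
    (col : Fin n × Fin n → C)
    -- proper colouring of the digraph G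
    (hproper : ∀ e ∈ E, ∀ f ∈ E, e ≠ f → (e.1 = f.1 ∨ e.2 = f.2) → col e ≠ col f)
    -- minimum in-degree at least (1-δ)n
    (hindeg : ∀ v : Fin n, (1 - δ) * n ≤ ((E.filter (fun e => e.2 = v)).card : ℝ))
    -- P is a rainbow path forest with |C(P)| ≤ (1-3δ)n
    (hPrainbow : Set.InjOn col ↑P)
    (hCP : ((P.image col).card : ℝ) ≤ (1 - 3 * δ) * n)
    -- Q is a set of 1/δ vertices
    (Q : Finset (Fin n)) (hQ : (Q.card : ℝ) = 1 / δ)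
    -- Cset ⊇ C(G) \ C(P) is a set of colours of G with |Cset| - |C(G)\C(P)| = Aδn
    (Cset : Finset C) (hCsub : Cset ⊆ E.image col)
    (hC0 : (E.image col) \ (P.image col) ⊆ Cset)
    (hA : (Cset.card : ℝ) - (((E.image col) \ (P.image col)).card : ℝ) = A * δ * n) :
    (A + 1) * δ * n ≤
      ((Finset.univ.filter (fun v : Fin n =>
          2 ≤ (E.filter (fun e => e.1 = v ∧ e.2 ∈ Q ∧ col e ∈ Cset)).card)).card : ℝ) := by
  classical
  set CG := E.image col with hCG
  set F := E.filter (fun e => e.2 ∈ Q ∧ col e ∈ Cset) with hF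
  set V2 := Finset.univ.filter (fun v : Fin n =>
      2 ≤ (E.filter (fun e => e.1 = v ∧ e.2 ∈ Q ∧ col e ∈ Cset)).card) with hV2
  -- colour deficiency bound: |C(G) \ Cset| ≤ (1-3δ)n - Aδn
  have hdef : ((CG \ Cset).card : ℝ) ≤ (1 - 3 * δ) * n - A * δ * n := by
    have h1 : (CG \ Cset).card = CG.card - Cset.card := Finset.card_sdiff_of_subset hCsub
    have hle : Cset.card ≤ CG.card := Finset.card_le_card hCsub
    have h2 : CG.card ≤ (CG \ P.image col).card + (P.image col).card :=
      Finset.card_le_card_sdiff_add_card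
    have h1' : ((CG \ Cset).card : ℝ) = (CG.card : ℝ) - Cset.card := by
      rw [h1]; push_cast [hle]; ring
    have h2' : (CG.card : ℝ) ≤ ((CG \ P.image col).card : ℝ) + (P.image col).card := by
      exact_mod_cast h2
    have hCsetcard : (Cset.card : ℝ) = ((CG \ P.image col).card : ℝ) + A * δ * n := by
      linarith [hA]
    linarith
  -- per-target lower bound
  have hq : ∀ q ∈ Q,
      (1 - δ) * n - ((1 - 3 * δ) * n - A * δ * n)
        ≤ ((F.filter (fun e => e.2 = q)).card : ℝ) := by
    intro q hqQ
    set Eq := E.filter (fun e => e.2 = q) with hEq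
    have hsplit : (Eq.filter (fun e => col e ∈ Cset)).card
        + (Eq.filter (fun e => ¬ col e ∈ Cset)).card = Eq.card :=
      Finset.card_filter_add_card_filter_not (fun e => col e ∈ Cset)
    -- edges into q with colour in Cset are in F.filter (·.2 = q)
    have hsub1 : Eq.filter (fun e => col e ∈ Cset) ⊆ F.filter (fun e => e.2 = q) := by
      intro e he
      simp only [hEq, Finset.mem_filter, hF] at he ⊢
      exact ⟨⟨he.1.1, he.1.2 ▸ hqQ, he.2⟩, he.1.2⟩
    -- edges into q have pairwise distinct colours
    have hinj : Set.InjOn col ↑(Eq.filter (fun e => ¬ col e ∈ Cset)) := by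
      intro e he f hf hef
      simp only [Finset.coe_filter, Set.mem_setOf_eq, hEq, Finset.mem_filter] at he hf
      by_contra hne
      exact hproper e he.1.1 f hf.1.1 hne (Or.inr (he.1.2.trans hf.1.2.symm)) hef
    have himg : (Eq.filter (fun e => ¬ col e ∈ Cset)).image col ⊆ CG \ Cset := by
      intro c hc
      simp only [Finset.mem_image] at hc
      obtain ⟨e, he, rfl⟩ := hc
      simp only [hEq, Finset.mem_filter] at he
      exact Finset.mem_sdiff.2 ⟨Finset.mem_image_of_mem col he.1.1, he.2⟩
    have hcard2 : (Eq.filter (fun e => ¬ col e ∈ Cset)).card ≤ (CG \ Cset).card := by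
      rw [← Finset.card_image_of_injOn hinj]
      exact Finset.card_le_card himg
    have hcard1 : (Eq.filter (fun e => col e ∈ Cset)).card
        ≤ (F.filter (fun e => e.2 = q)).card := Finset.card_le_card hsub1
    have hEqcard : (1 - δ) * n ≤ (Eq.card : ℝ) := hindeg q
    have : (Eq.card : ℝ) ≤ ((F.filter (fun e => e.2 = q)).card : ℝ) + (CG \ Cset).card := by
      rw [← hsplit]; push_cast
      have := (Nat.cast_le (α := ℝ)).2 hcard1
      have := (Nat.cast_le (α := ℝ)).2 hcard2
      linarith
    linarith
  -- lower bound on |F|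
  have hFlower : (A + 2) * n ≤ (F.card : ℝ) := by
    have hfib : F.card = ∑ q ∈ Q, (F.filter (fun e => e.2 = q)).card := by
      apply Finset.card_eq_sum_card_fiberwise
      intro e he
      simp only [hF, Finset.mem_coe, Finset.mem_filter] at he
      exact he.2.1
    have hsum : (Q.card : ℝ) * ((1 - δ) * n - ((1 - 3 * δ) * n - A * δ * n))
        ≤ ∑ q ∈ Q, ((F.filter (fun e => e.2 = q)).card : ℝ) := by
      calc (Q.card : ℝ) * ((1 - δ) * n - ((1 - 3 * δ) * n - A * δ * n))
          = ∑ _q ∈ Q, ((1 - δ) * n - ((1 - 3 * δ) * n - A * δ * n)) := by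
            rw [Finset.sum_const, nsmul_eq_mul]
        _ ≤ ∑ q ∈ Q, ((F.filter (fun e => e.2 = q)).card : ℝ) := Finset.sum_le_sum hq
    have hsum' : (∑ q ∈ Q, ((F.filter (fun e => e.2 = q)).card : ℝ)) = (F.card : ℝ) := by
      rw [hfib]; push_cast; ring
    have hδn : (1 / δ) * ((1 - δ) * n - ((1 - 3 * δ) * n - A * δ * n)) = (A + 2) * n := by
      field_simp
      ring
    rw [hsum'] at hsum
    rw [hQ, hδn] at hsum
    exact hsum
  -- upper bound on |F|
  have hFupper : (F.card : ℝ) ≤ (V2.card : ℝ) * (1 / δ) + n := by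
    have hfib : F.card = ∑ v ∈ Finset.univ, (F.filter (fun e => e.1 = v)).card :=
      Finset.card_eq_sum_card_fiberwise (fun e _ => Finset.mem_univ e.1)
    have hFv : ∀ v : Fin n, F.filter (fun e => e.1 = v)
        = E.filter (fun e => e.1 = v ∧ e.2 ∈ Q ∧ col e ∈ Cset) := by
      intro v
      ext e
      simp only [hF, Finset.mem_filter]
      tauto
    have hvQ : ∀ v : Fin n, (F.filter (fun e => e.1 = v)).card ≤ Q.card := by
      intro v
      apply Finset.card_le_card_of_injOn (fun e => e.2)
      · intro e he
        simp only [hF, Finset.mem_coe, Finset.mem_filter] at he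
        exact he.1.2.1
      · intro e he f hf hef
        simp only [hF, Finset.mem_filter, Finset.mem_coe] at he hf
        exact Prod.ext (he.2.trans hf.2.symm) hef
    have hv1 : ∀ v : Fin n, v ∉ V2 → (F.filter (fun e => e.1 = v)).card ≤ 1 := by
      intro v hv
      simp only [hV2, Finset.mem_filter, Finset.mem_univ, true_and, not_le] at hv
      rw [hFv v]
      omega
    have hnat : F.card ≤ V2.card * Q.card + n := by
      rw [hfib]
      have : ∑ v ∈ Finset.univ, (F.filter (fun e => e.1 = v)).card
          = ∑ v ∈ V2, (F.filter (fun e => e.1 = v)).card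
            + ∑ v ∈ Finset.univ \ V2, (F.filter (fun e => e.1 = v)).card := by
        rw [← Finset.sum_sdiff (Finset.subset_univ V2)]; ring
      rw [this]
      have h1 : ∑ v ∈ V2, (F.filter (fun e => e.1 = v)).card ≤ V2.card * Q.card := by
        calc ∑ v ∈ V2, (F.filter (fun e => e.1 = v)).card
            ≤ ∑ _v ∈ V2, Q.card := Finset.sum_le_sum (fun v _ => hvQ v)
          _ = V2.card * Q.card := by rw [Finset.sum_const, smul_eq_mul]
      have h2 : ∑ v ∈ Finset.univ \ V2, (F.filter (fun e => e.1 = v)).card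
          ≤ (Finset.univ \ V2).card := by
        calc ∑ v ∈ Finset.univ \ V2, (F.filter (fun e => e.1 = v)).card
            ≤ ∑ _v ∈ Finset.univ \ V2, 1 :=
              Finset.sum_le_sum (fun v hv => hv1 v (Finset.mem_sdiff.1 hv).2)
          _ = (Finset.univ \ V2).card := by rw [Finset.sum_const, smul_eq_mul, mul_one]
      have h3 : (Finset.univ \ V2).card ≤ n := by
        calc (Finset.univ \ V2).card ≤ (Finset.univ : Finset (Fin n)).card :=
              Finset.card_le_card (Finset.sdiff_subset)
          _ = n := Finset.card_univ.trans (Fintype.card_fin n)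
      omega
    have : (F.card : ℝ) ≤ (V2.card : ℝ) * (Q.card : ℝ) + n := by exact_mod_cast hnat
    rwa [hQ] at this
  -- combine
  have hchain : (A + 2) * n ≤ (V2.card : ℝ) * (1 / δ) + n := hFlower.trans hFupper
  have hδne : δ ≠ 0 := ne_of_gt hδ
  have h4 : (A + 1) * n ≤ (V2.card : ℝ) * (1 / δ) := by linarith
  calc (A + 1) * δ * n = δ * ((A + 1) * n) := by ring
      _ ≤ δ * ((V2.card : ℝ) * (1 / δ)) := mul_le_mul_of_nonneg_left (by linarith) (le_of_lt hδ)
      _ = (V2.card : ℝ) := by field_simp
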